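/- Let x₁,…,xₙ be positive reals, δᵢ ∈ {0,1}, m = ∑ δᵢ ≥ 1, and fix r < −1 and q ∈ ℝ, p ≥ 0. Then the double integral ∫₀^∞ ∫₀^∞ exp(−p/β) η^(mβ+r) β^(m+q) (∏ x_i^{δᵢβ}) exp(−(∑ x_i^β) η^β) dη dβ is infinite. -/

import Mathlib

open MeasureTheory Set Finset

lemma aux1 (K : ℝ) (hK : 0 < K) :
    ∫⁻ η in Ioo (0:ℝ) 1, ENNReal.ofReal (K * η ^ (-1:ℝ)) = ⊤ := by
  by_contra h
  have hmeas : AEStronglyMeasurable (fun η : ℝ => K * η ^ (-1:ℝ))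
      (volume.restrict (Ioo (0:ℝ) 1)) :=
    ((measurable_id.pow_const _).const_mul K).aestronglyMeasurable
  have hnn : 0 ≤ᵐ[volume.restrict (Ioo (0:ℝ) 1)] fun η : ℝ => K * η ^ (-1:ℝ) := by
    filter_upwards [ae_restrict_mem measurableSet_Ioo] with η hη
    exact mul_nonneg hK.le (Real.rpow_nonneg hη.1.le _)
  have hint : IntegrableOn (fun η : ℝ => K * η ^ (-1:ℝ)) (Ioo 0 1) :=
    ((lintegral_ofReal_ne_top_iff_integrable hmeas hnn).mp h)
  have : IntegrableOn (fun η : ℝ => η ^ (-1:ℝ)) (Ioo 0 1) := by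
    have := hint.const_mul K⁻¹
    simp only [← mul_assoc, inv_mul_cancel₀ hK.ne', one_mul] at this
    exact this
  rw [intervalIntegral.integrableOn_Ioo_rpow_iff one_pos] at this
  linarith

lemma aux2 (β a C c : ℝ) (hβ : 0 < β) (ha : a ≤ -1) (hC : 0 < C) (hc : 0 < c) :
    ∫⁻ η in Ioi (0:ℝ), ENNReal.ofReal (C * η ^ a * Real.exp (-c * η ^ β)) = ⊤ := by
  have hsub : Ioo (0:ℝ) 1 ⊆ Ioi 0 := Ioo_subset_Ioi_self
  rw [eq_top_iff]
  calc (⊤ : ENNReal) = ∫⁻ η in Ioo (0:ℝ) 1, ENNReal.ofReal (C * Real.exp (-c) * η ^ (-1:ℝ)) := by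
        rw [aux1 _ (mul_pos hC (Real.exp_pos _))]
    _ ≤ ∫⁻ η in Ioo (0:ℝ) 1, ENNReal.ofReal (C * η ^ a * Real.exp (-c * η ^ β)) := by
        refine lintegral_mono_ae ?_
        filter_upwards [ae_restrict_mem measurableSet_Ioo] with η hη
        apply ENNReal.ofReal_le_ofReal
        have h1 : η ^ (-1:ℝ) ≤ η ^ a :=
          Real.rpow_le_rpow_of_exponent_ge hη.1 hη.2.le ha
        have h2 : Real.exp (-c) ≤ Real.exp (-c * η ^ β) := by
          apply Real.exp_le_exp.mpr
          have : η ^ β ≤ 1 := Real.rpow_le_one hη.1.le hη.2.le hβ.le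
          nlinarith
        calc C * Real.exp (-c) * η ^ (-1:ℝ) = C * η ^ (-1:ℝ) * Real.exp (-c) := by ring
          _ ≤ C * η ^ a * Real.exp (-c * η ^ β) := by
              apply mul_le_mul (by gcongr) h2 (Real.exp_pos _).le
              exact mul_nonneg hC.le (Real.rpow_nonneg hη.1.le _)
    _ ≤ _ := lintegral_mono_set hsub

theorem stmt_8 (n : ℕ) (x : Fin n → ℝ) (hx : ∀ i, 0 < x i) (δ : Fin n → ℕ)
    (hδ : ∀ i, δ i = 0 ∨ δ i = 1) (m : ℕ) (hm : m = ∑ i, δ i) (hm1 : 1 ≤ m)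
    (r q p : ℝ) (hr : r < -1) (hp : 0 ≤ p) :
    (∫⁻ β in Ioi (0:ℝ), ∫⁻ η in Ioi (0:ℝ),
        ENNReal.ofReal (Real.exp (-p / β) * η ^ ((m : ℝ) * β + r) * β ^ ((m : ℝ) + q) *
          (∏ i, x i ^ ((δ i : ℝ) * β)) * Real.exp (-(∑ i, x i ^ β) * η ^ β))) = ⊤ := by
  have hne : (univ : Finset (Fin n)).Nonempty := by
    by_contra h
    rw [Finset.not_nonempty_iff_eq_empty] at h
    rw [h, Finset.sum_empty] at hm
    omega
  have hmpos : (0:ℝ) < m := by exact_mod_cast hm1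
  set b : ℝ := (-1 - r) / m with hbdef
  have hb : 0 < b := div_pos (by linarith) hmpos
  have key : ∀ β ∈ Ioo (0:ℝ) b,
      (∫⁻ η in Ioi (0:ℝ),
        ENNReal.ofReal (Real.exp (-p / β) * η ^ ((m : ℝ) * β + r) * β ^ ((m : ℝ) + q) *
          (∏ i, x i ^ ((δ i : ℝ) * β)) * Real.exp (-(∑ i, x i ^ β) * η ^ β))) = ⊤ := by
    intro β hβ
    have hβ0 : 0 < β := hβ.1
    set C : ℝ := Real.exp (-p / β) * β ^ ((m : ℝ) + q) * ∏ i, x i ^ ((δ i : ℝ) * β) with hC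
    set c : ℝ := ∑ i, x i ^ β with hc
    have hCpos : 0 < C := by
      apply mul_pos (mul_pos (Real.exp_pos _) (Real.rpow_pos_of_pos hβ0 _))
      exact Finset.prod_pos fun i _ => Real.rpow_pos_of_pos (hx i) _
    have hcpos : 0 < c :=
      Finset.sum_pos (fun i _ => Real.rpow_pos_of_pos (hx i) _) hne
    have ha : (m : ℝ) * β + r ≤ -1 := by
      have : (m:ℝ) * β < -1 - r := by
        have := hβ.2
        rw [hbdef, lt_div_iff₀ hmpos] at this
        linarith
      linarith
    have heq : ∀ η : ℝ,
        ENNReal.ofReal (Real.exp (-p / β) * η ^ ((m : ℝ) * β + r) * β ^ ((m : ℝ) + q) *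
          (∏ i, x i ^ ((δ i : ℝ) * β)) * Real.exp (-(∑ i, x i ^ β) * η ^ β))
        = ENNReal.ofReal (C * η ^ ((m : ℝ) * β + r) * Real.exp (-c * η ^ β)) := by
      intro η
      congr 1
      rw [hC, hc]
      ring
    rw [lintegral_congr heq]
    exact aux2 β _ C c hβ0 ha hCpos hcpos
  rw [eq_top_iff]
  calc (⊤ : ENNReal) = ∫⁻ β in Ioo (0:ℝ) b, (⊤ : ENNReal) := by
        rw [setLIntegral_const]
        simp [Real.volume_Ioo, ENNReal.top_mul, hb.le, ENNReal.ofReal_eq_zero, hb,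
          not_le.mpr hb]
    _ = ∫⁻ β in Ioo (0:ℝ) b, (∫⁻ η in Ioi (0:ℝ),
        ENNReal.ofReal (Real.exp (-p / β) * η ^ ((m : ℝ) * β + r) * β ^ ((m : ℝ) + q) *
          (∏ i, x i ^ ((δ i : ℝ) * β)) * Real.exp (-(∑ i, x i ^ β) * η ^ β))) :=
        (setLIntegral_congr_fun measurableSet_Ioo key).symm
    _ ≤ _ := lintegral_mono_set Ioo_subset_Ioi_self
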